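/- arXiv:2410.17125 — 2 statements merged into one kernel-verified Lean document; each statement's English description precedes it below -/
import Mathlib

section
/- Let 𝔤 be a finite-dimensional complex Lie algebra and 𝔤' ⊆ 𝔤 a Lie subalgebra. Let V be a nonzero U(𝔤)-module whose restriction to 𝔤' is semisimple, let A be the centralizer of the image of 𝔤' in U(𝔤)/Ann_{U(𝔤)}(V), and assume that for every simple 𝔤'-submodule V' of V the A-module Hom_{𝔤'}(V', V) (with A acting by postcomposition) is simple. Then the restriction of V to 𝔤' is multiplicity-free — that is, dim_ℂ Hom_{𝔤'}(V', V) ≤ 1 for every simple 𝔤'-submodule V' of V — if and only if the algebra A is commutative. -/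
/-- A noncommutative polynomial with integer coefficients in `n` indeterminates (an element of
the free `ℤ`-algebra on `n` generators) is a *polynomial identity* of a ring `A` if it vanishes
under every substitution of elements of `A` for the indeterminates. -/
def IsPolyIdentity (A : Type*) [Ring A] {n : ℕ} (p : FreeAlgebra ℤ (Fin n)) : Prop :=
  ∀ v : Fin n → A, FreeAlgebra.lift ℤ v p = 0

/-- The PI degree of a ring `A`:
`PIdeg A = sup {n ≥ 1 : every polynomial identity of A is a polynomial identity of Mₙ(ℂ)}`,
an element of `ℕ∞`. -/
noncomputable def PIdeg (A : Type*) [Ring A] : ℕ∞ :=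
  sSup {N : ℕ∞ | ∃ n : ℕ, N = n ∧ 1 ≤ n ∧
    ∀ (m : ℕ) (p : FreeAlgebra ℤ (Fin m)),
      IsPolyIdentity A p → IsPolyIdentity (Matrix (Fin n) (Fin n) ℂ) p}

/-- The space `Hom_{L}(M, N)` of `L`-equivariant `R`-linear maps between two Lie modules,
as a submodule of the space of all `R`-linear maps `M → N`. -/
def lieEquivariantHoms (R L M N : Type*) [CommRing R] [LieRing L] [LieAlgebra R L]
    [AddCommGroup M] [Module R M] [LieRingModule L M]
    [AddCommGroup N] [Module R N] [LieRingModule L N] [LieModule R L N] :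
    Submodule R (M →ₗ[R] N) where
  carrier := {φ | ∀ (y : L) (m : M), φ ⁅y, m⁆ = ⁅y, φ m⁆}
  add_mem' := by
    intro a b ha hb y m
    simp [ha y m, hb y m]
  zero_mem' := by intro y m; simp
  smul_mem' := by
    intro c φ hφ y m
    simp [hφ y m]

open UniversalEnvelopingAlgebra in
/-- The centralizer of the image of a Lie subalgebra `𝔤' ⊆ 𝔤` in `U(𝔤)/Ann_{U(𝔤)}(V)`,
realized (via the canonical isomorphism of `U(𝔤)/Ann_{U(𝔤)}(V)` with the image of `U(𝔤)` in
`End_ℂ(V)`) as the subalgebra of `End_ℂ(V)` consisting of the operators coming from `U(𝔤)`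
that commute with the image of `𝔤'`. -/
noncomputable def invariantsAlgebra {𝔤 : Type*} [LieRing 𝔤] [LieAlgebra ℂ 𝔤]
    (𝔤' : LieSubalgebra ℂ 𝔤) (V : Type*) [AddCommGroup V] [Module ℂ V]
    [LieRingModule 𝔤 V] [LieModule ℂ 𝔤 V] : Subalgebra ℂ (Module.End ℂ V) :=
  (UniversalEnvelopingAlgebra.lift ℂ (LieModule.toEnd ℂ 𝔤 V)).range ⊓
    Subalgebra.centralizer ℂ
      {x : Module.End ℂ V | ∃ y : 𝔤',
        x = UniversalEnvelopingAlgebra.lift ℂ (LieModule.toEnd ℂ 𝔤 V)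
              (UniversalEnvelopingAlgebra.ι ℂ (y : 𝔤))}



open Polynomial in
lemma aux_exists_spectrum {E : Type*} [AddCommGroup E] [Module ℂ E] [Nontrivial E]
    (hrank : Module.rank ℂ E ≤ Cardinal.aleph0) (T : Module.End ℂ E) :
    ∃ μ : ℂ, ¬ IsUnit (algebraMap ℂ (Module.End ℂ E) μ - T) := by
  by_contra hcon
  push_neg at hcon
  have hspec : spectrum ℂ T = ∅ := by
    ext μ; simp [spectrum.mem_iff, hcon μ]
  have hpq : ∀ q : ℂ[X], q ≠ 0 → IsUnit (Polynomial.aeval T q) := by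
    intro q hq
    have hsp : Splits q := IsAlgClosed.splits q
    have heq := hsp.eq_prod_roots
    have h1 : IsUnit ((Polynomial.aeval T)
        (Multiset.map (fun a : ℂ => X - C a) q.roots).prod) := by
      by_contra h
      obtain ⟨k, hk, -⟩ := spectrum.exists_mem_of_not_isUnit_aeval_prod h
      rw [hspec] at hk
      exact hk
    have h2 : IsUnit ((Polynomial.aeval T) (C q.leadingCoeff)) := by
      rw [Polynomial.aeval_C]
      exact (isUnit_iff_ne_zero.mpr (Polynomial.leadingCoeff_ne_zero.mpr hq)).map
        (algebraMap ℂ (Module.End ℂ E))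
    rw [heq, map_mul]
    exact h2.mul h1
  obtain ⟨e, he⟩ := exists_ne (0 : E)
  have hunit : ∀ μ : ℂ, IsUnit (T - algebraMap ℂ (Module.End ℂ E) μ) := fun μ => by
    simpa [neg_sub] using (hcon μ).neg
  let u : ℂ → (Module.End ℂ E)ˣ := fun μ => (hunit μ).unit
  have hu : ∀ μ : ℂ, (u μ : Module.End ℂ E) = T - algebraMap ℂ (Module.End ℂ E) μ :=
    fun μ => (hunit μ).unit_spec
  let r : ℂ → E := fun μ => (((u μ)⁻¹ : (Module.End ℂ E)ˣ) : Module.End ℂ E) e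
  have hli : LinearIndependent ℂ r := by
    rw [linearIndependent_iff']
    intro s gc hsum μ hμs
    by_contra hgμ
    set q : ℂ[X] := ∑ l ∈ s, C (gc l) * ∏ l' ∈ s.erase l, (X - C l') with hqdef
    have hkey : ∀ l ∈ s, (Polynomial.aeval T (∏ l' ∈ s, (X - C l'))) (r l)
        = (Polynomial.aeval T (∏ l' ∈ s.erase l, (X - C l'))) e := by
      intro l hl
      have hfac : (∏ l' ∈ s, (X - C l'))
          = (∏ l' ∈ s.erase l, (X - C l')) * (X - C l) :=
        (Finset.prod_erase_mul s _ hl).symm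
      rw [hfac, map_mul]
      have hXC : (Polynomial.aeval T) (X - C l) = (u l : Module.End ℂ E) := by
        rw [hu]; simp [Algebra.algebraMap_eq_smul_one]
      rw [hXC, Module.End.mul_apply]
      congr 1
      show ((u l : Module.End ℂ E) * ((u l)⁻¹ : (Module.End ℂ E)ˣ)) e = e
      rw [Units.mul_inv, Module.End.one_apply]
    have hq0 : (Polynomial.aeval T q) e = 0 := by
      have hterm : ∀ l ∈ s, ((Polynomial.aeval T) (C (gc l) * ∏ l' ∈ s.erase l, (X - C l'))) e
          = gc l • ((Polynomial.aeval T) (∏ l' ∈ s, (X - C l'))) (r l) := by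
        intro l hl
        rw [hkey l hl, map_mul, Polynomial.aeval_C, Module.End.mul_apply,
          Module.algebraMap_end_apply]
      rw [hqdef, map_sum, LinearMap.sum_apply, Finset.sum_congr rfl hterm]
      have hswap : ∑ x ∈ s, gc x • ((Polynomial.aeval T) (∏ l' ∈ s, (X - C l'))) (r x)
          = ((Polynomial.aeval T) (∏ l' ∈ s, (X - C l'))) (∑ x ∈ s, gc x • r x) := by
        rw [map_sum]
        exact Finset.sum_congr rfl fun x _ => (map_smul _ _ _).symm
      rw [hswap, hsum, map_zero]
    have hqne : q ≠ 0 := by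
      intro h0
      have heval : Polynomial.eval μ q = 0 := by rw [h0]; simp
      rw [hqdef, Polynomial.eval_finset_sum] at heval
      have hz : ∀ l ∈ s, l ≠ μ →
          Polynomial.eval μ (C (gc l) * ∏ l' ∈ s.erase l, (X - C l')) = 0 := by
        intro l _ hlμ
        rw [Polynomial.eval_mul, Polynomial.eval_prod]
        have : ∏ l' ∈ s.erase l, Polynomial.eval μ (X - C l') = 0 :=
          Finset.prod_eq_zero (Finset.mem_erase.mpr ⟨fun h => hlμ h.symm, hμs⟩) (by simp)
        rw [this, mul_zero]
      rw [Finset.sum_eq_single_of_mem μ hμs (fun l hl hlμ => hz l hl hlμ)] at heval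
      rw [Polynomial.eval_mul, Polynomial.eval_C, Polynomial.eval_prod] at heval
      rcases mul_eq_zero.mp heval with h | h
      · exact hgμ h
      · obtain ⟨l', hl', hz'⟩ := Finset.prod_eq_zero_iff.mp h
        simp only [Polynomial.eval_sub, Polynomial.eval_X, Polynomial.eval_C,
          sub_eq_zero] at hz'
        exact (Finset.mem_erase.mp hl').1 hz'.symm
    have hinj := ((Module.End.isUnit_iff _).mp (hpq q hqne)).injective
    exact he (hinj (by simpa using hq0))
  have hcard := hli.cardinal_lift_le_rank
  rw [Cardinal.mk_complex, Cardinal.lift_continuum] at hcard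
  have h1 : Cardinal.lift.{0} (Module.rank ℂ E) ≤ Cardinal.aleph0 := by
    rw [Cardinal.lift_uzero]; exact hrank
  exact absurd (hcard.trans h1) Cardinal.aleph0_lt_continuum.not_ge

lemma aux_rank_uea {𝔤 : Type*} [LieRing 𝔤] [LieAlgebra ℂ 𝔤] [FiniteDimensional ℂ 𝔤] :
    Module.rank ℂ (UniversalEnvelopingAlgebra ℂ 𝔤) ≤ Cardinal.aleph0 := by
  have h1 : Module.rank ℂ (UniversalEnvelopingAlgebra ℂ 𝔤)
      ≤ Module.rank ℂ (TensorAlgebra ℂ 𝔤) :=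
    LinearMap.rank_le_of_surjective (UniversalEnvelopingAlgebra.mkAlgHom ℂ 𝔤).toLinearMap
      (RingCon.mkₐ_surjective (α := ℂ) _)
  refine h1.trans ?_
  have e := (TensorAlgebra.equivFreeAlgebra (Module.finBasis ℂ 𝔤)).toLinearEquiv
  have h2 := e.lift_rank_eq
  have h3 : Module.rank ℂ (FreeAlgebra ℂ (Fin (Module.finrank ℂ 𝔤))) ≤ Cardinal.aleph0 := by
    rw [FreeAlgebra.rank_eq, Cardinal.lift_uzero]
    exact Cardinal.mk_le_aleph0
  calc Module.rank ℂ (TensorAlgebra ℂ 𝔤)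
      = Cardinal.lift.{0} (Module.rank ℂ (TensorAlgebra ℂ 𝔤)) := (Cardinal.lift_uzero _).symm
    _ = Cardinal.lift (Module.rank ℂ (FreeAlgebra ℂ (Fin (Module.finrank ℂ 𝔤)))) := h2
    _ ≤ Cardinal.lift Cardinal.aleph0 := Cardinal.lift_le.mpr h3
    _ = Cardinal.aleph0 := Cardinal.lift_aleph0

section
variable {𝔤 : Type*} [LieRing 𝔤] [LieAlgebra ℂ 𝔤] (𝔤' : LieSubalgebra ℂ 𝔤)
  {V : Type*} [AddCommGroup V] [Module ℂ V] [LieRingModule 𝔤 V] [LieModule ℂ 𝔤 V]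

lemma aux_invariants_comm {a : Module.End ℂ V} (ha : a ∈ invariantsAlgebra 𝔤' V)
    (y : 𝔤') (v : V) : a ⁅(y : 𝔤), v⁆ = ⁅(y : 𝔤), a v⁆ := by
  have ha2 := ha.2
  have h := (Subalgebra.mem_centralizer_iff ℂ).mp ha2 _ ⟨y, rfl⟩
  rw [UniversalEnvelopingAlgebra.lift_ι_apply] at h
  have h2 : a ((LieModule.toEnd ℂ 𝔤 V (y : 𝔤)) v) = (LieModule.toEnd ℂ 𝔤 V (y : 𝔤)) (a v) := by
    rw [← Module.End.mul_apply, ← Module.End.mul_apply, ← h]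
  simpa [LieModule.toEnd_apply_apply] using h2

lemma aux_comp_mem (V' : LieSubmodule ℂ 𝔤' V) {a : Module.End ℂ V}
    (ha : a ∈ invariantsAlgebra 𝔤' V) {φ : ↥V' →ₗ[ℂ] V}
    (hφ : φ ∈ lieEquivariantHoms ℂ 𝔤' V' V) :
    a ∘ₗ φ ∈ lieEquivariantHoms ℂ 𝔤' V' V := by
  intro y m
  have h1 := hφ y m
  simp only [LinearMap.comp_apply]
  rw [h1, LieSubalgebra.coe_bracket_of_module, LieSubalgebra.coe_bracket_of_module,
    aux_invariants_comm 𝔤' ha y (φ m)]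

lemma aux_incl_mem (V' : LieSubmodule ℂ 𝔤' V) :
    (V'.incl : ↥V' →ₗ[ℂ] V) ∈ lieEquivariantHoms ℂ 𝔤' V' V := by
  intro y m
  show ((⁅y, m⁆ : ↥V') : V) = ⁅y, ((m : ↥V') : V)⁆
  rw [LieSubmodule.coe_bracket, LieSubalgebra.coe_bracket_of_module]

end

set_option maxHeartbeats 2000000 in
/-- In the setting of Statement 9 (V a nonzero `U(𝔤)`-module, semisimple over the
subalgebra `𝔤'`, with every `Hom_{𝔤'}(V', V)` a simple module over the centralizer `A` of the
image of `𝔤'` in `U(𝔤)/Ann_{U(𝔤)}(V)`), the restriction of `V` to `𝔤'` is multiplicity-free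
(`dim_ℂ Hom_{𝔤'}(V', V) ≤ 1` for every simple `𝔤'`-submodule `V'`) if and only if the algebra
`A` is commutative. -/
theorem multiplicity_free_iff_commutative
    {𝔤 : Type*} [LieRing 𝔤] [LieAlgebra ℂ 𝔤] [FiniteDimensional ℂ 𝔤]
    (𝔤' : LieSubalgebra ℂ 𝔤)
    {V : Type*} [AddCommGroup V] [Module ℂ V] [LieRingModule 𝔤 V] [LieModule ℂ 𝔤 V]
    [Nontrivial V]
    (hss : sSup {W : LieSubmodule ℂ 𝔤' V | IsAtom W} = ⊤)
    (hsimple : ∀ V' : LieSubmodule ℂ 𝔤' V, IsAtom V' →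
      lieEquivariantHoms ℂ 𝔤' V' V ≠ ⊥ ∧
      ∀ U : Submodule ℂ (↥V' →ₗ[ℂ] V), U ≤ lieEquivariantHoms ℂ 𝔤' V' V →
        (∀ a ∈ invariantsAlgebra 𝔤' V, ∀ φ ∈ U, a ∘ₗ φ ∈ U) →
        U = ⊥ ∨ U = lieEquivariantHoms ℂ 𝔤' V' V) :
    (∀ V' : LieSubmodule ℂ 𝔤' V, IsAtom V' →
        Module.rank ℂ (lieEquivariantHoms ℂ 𝔤' V' V) ≤ 1) ↔
      ∀ a b : invariantsAlgebra 𝔤' V, a * b = b * a := by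
  constructor
  · intro hmf a b
    set f : Module.End ℂ V := ↑a * ↑b - ↑b * ↑a with hfdef
    have hfcomm : ∀ (y : 𝔤') (v : V), f ⁅(y : 𝔤), v⁆ = ⁅(y : 𝔤), f v⁆ := by
      intro y v
      simp only [hfdef, LinearMap.sub_apply, Module.End.mul_apply,
        aux_invariants_comm 𝔤' a.2 y, aux_invariants_comm 𝔤' b.2 y, lie_sub]
    let K : LieSubmodule ℂ 𝔤' V :=
      { LinearMap.ker f with
        lie_mem := by
          intro y v hv
          have hv' : f v = 0 := hv
          show f ⁅y, v⁆ = 0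
          rw [LieSubalgebra.coe_bracket_of_module, hfcomm y v, hv', lie_zero] }
    have hKatom : ∀ W ∈ {W : LieSubmodule ℂ 𝔤' V | IsAtom W}, W ≤ K := by
      intro W hW
      haveI : Module.Free ℂ ↥(lieEquivariantHoms ℂ 𝔤' W V) :=
        Module.Free.of_divisionRing ℂ _
      obtain ⟨v₀, hv₀⟩ := rank_le_one_iff.mp (hmf W hW)
      have hιmem := aux_incl_mem 𝔤' W
      set ι : ↥W →ₗ[ℂ] V := (W.incl : ↥W →ₗ[ℂ] V) with hιdef
      have hιne : ι ≠ 0 := by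
        obtain ⟨w, hwW, hw0⟩ : ∃ w ∈ W, w ≠ 0 := by
          by_contra hc
          push_neg at hc
          exact hW.1 ((LieSubmodule.eq_bot_iff _).mpr hc)
        intro h0
        apply hw0
        have := congrFun (congrArg DFunLike.coe h0) ⟨w, hwW⟩
        simp [hιdef] at this; exact this
      obtain ⟨rι, hrι⟩ := hv₀ ⟨ι, hιmem⟩
      obtain ⟨ra, hra⟩ := hv₀ ⟨↑a ∘ₗ ι, aux_comp_mem 𝔤' W a.2 hιmem⟩
      obtain ⟨rb, hrb⟩ := hv₀ ⟨↑b ∘ₗ ι, aux_comp_mem 𝔤' W b.2 hιmem⟩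
      have hrι0 : rι ≠ 0 := by
        intro h
        rw [h, zero_smul] at hrι
        exact hιne (by simpa using (congrArg Subtype.val hrι).symm)
      have ha' : (↑a : Module.End ℂ V) ∘ₗ ι = (ra * rι⁻¹) • ι := by
        have : (⟨↑a ∘ₗ ι, aux_comp_mem 𝔤' W a.2 hιmem⟩ :
            ↥(lieEquivariantHoms ℂ 𝔤' W V)) = (ra * rι⁻¹) • ⟨ι, hιmem⟩ := by
          rw [← hra, ← hrι, smul_smul, mul_assoc, inv_mul_cancel₀ hrι0, mul_one]
        simpa using congrArg Subtype.val this
      have hb' : (↑b : Module.End ℂ V) ∘ₗ ι = (rb * rι⁻¹) • ι := by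
        have : (⟨↑b ∘ₗ ι, aux_comp_mem 𝔤' W b.2 hιmem⟩ :
            ↥(lieEquivariantHoms ℂ 𝔤' W V)) = (rb * rι⁻¹) • ⟨ι, hιmem⟩ := by
          rw [← hrb, ← hrι, smul_smul, mul_assoc, inv_mul_cancel₀ hrι0, mul_one]
        simpa using congrArg Subtype.val this
      intro v hv
      show f v = 0
      have hιv : ι ⟨v, hv⟩ = v := rfl
      have hav : (↑a : Module.End ℂ V) v = (ra * rι⁻¹) • v := by
        have := congrFun (congrArg DFunLike.coe ha') ⟨v, hv⟩
        simpa [hιv] using this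
      have hbv : (↑b : Module.End ℂ V) v = (rb * rι⁻¹) • v := by
        have := congrFun (congrArg DFunLike.coe hb') ⟨v, hv⟩
        simpa [hιv] using this
      have h1 : (↑a * ↑b : Module.End ℂ V) v = (↑b * ↑a : Module.End ℂ V) v := by
        simp only [Module.End.mul_apply, hav, hbv, map_smul, smul_smul]
        rw [mul_comm]
      simp only [hfdef, LinearMap.sub_apply, h1, sub_self]
    have hKtop : (⊤ : LieSubmodule ℂ 𝔤' V) ≤ K := hss ▸ sSup_le hKatom
    have hf0 : ∀ v : V, f v = 0 := by
      intro v
      exact hKtop (LieSubmodule.mem_top v)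
    apply Subtype.ext
    apply LinearMap.ext
    intro v
    have := hf0 v
    rw [hfdef, LinearMap.sub_apply, sub_eq_zero] at this
    simpa using this
  · intro hcomm V' hV'
    obtain ⟨hne, hsimp⟩ := hsimple V' hV'
    set H := lieEquivariantHoms ℂ 𝔤' V' V with hHdef
    obtain ⟨φ₀, hφ₀H, hφ₀⟩ := Submodule.exists_mem_ne_zero_of_ne_bot hne
    set A := invariantsAlgebra 𝔤' V with hAdef
    let Ψ : ↥(Subalgebra.toSubmodule A) →ₗ[ℂ] (↥V' →ₗ[ℂ] V) :=
      { toFun := fun x => (x : Module.End ℂ V) ∘ₗ φ₀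
        map_add' := by intro x y; simp [LinearMap.add_comp]
        map_smul' := by intro c x; simp [LinearMap.smul_comp] }
    have hΨ : ∀ x, Ψ x = (x : Module.End ℂ V) ∘ₗ φ₀ := fun _ => rfl
    have hUle : LinearMap.range Ψ ≤ H := by
      rintro _ ⟨x, rfl⟩
      exact aux_comp_mem 𝔤' V' ((Subalgebra.mem_toSubmodule A).mp x.2) hφ₀H
    have hUstab : ∀ g ∈ A, ∀ φ ∈ LinearMap.range Ψ, g ∘ₗ φ ∈ LinearMap.range Ψ := by
      rintro g hg _ ⟨x, rfl⟩
      refine ⟨⟨g * ↑x, (Subalgebra.mem_toSubmodule A).mpr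
        (A.mul_mem hg ((Subalgebra.mem_toSubmodule A).mp x.2))⟩, ?_⟩
      show (g * (x : Module.End ℂ V)) ∘ₗ φ₀ = g ∘ₗ ((x : Module.End ℂ V) ∘ₗ φ₀)
      rw [Module.End.mul_eq_comp, LinearMap.comp_assoc]
    have hUne : LinearMap.range Ψ ≠ ⊥ := by
      intro hbot
      have hmem : φ₀ ∈ LinearMap.range Ψ := by
        refine ⟨⟨1, (Subalgebra.mem_toSubmodule A).mpr A.one_mem⟩, ?_⟩
        show (1 : Module.End ℂ V) ∘ₗ φ₀ = φ₀
        rw [Module.End.one_eq_id, LinearMap.id_comp]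
      rw [hbot] at hmem
      exact hφ₀ ((Submodule.mem_bot ℂ).mp hmem)
    have hUH : LinearMap.range Ψ = H := (hsimp _ hUle hUstab).resolve_left hUne
    have hrankH : Module.rank ℂ ↥H ≤ Cardinal.aleph0 := by
      have h1 : Module.rank ℂ ↥H ≤ Module.rank ℂ ↥(Subalgebra.toSubmodule A) := by
        rw [← hUH]; exact rank_range_le Ψ
      have h2 : Subalgebra.toSubmodule A ≤ LinearMap.range
          (UniversalEnvelopingAlgebra.lift ℂ (LieModule.toEnd ℂ 𝔤 V)).toLinearMap := by
        intro z hz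
        obtain ⟨y, hy⟩ := ((Subalgebra.mem_toSubmodule A).mp hz).1
        exact ⟨y, hy⟩
      have h3 := Submodule.rank_mono h2
      have h4 := lift_rank_range_le
        (UniversalEnvelopingAlgebra.lift ℂ (LieModule.toEnd ℂ 𝔤 V)).toLinearMap
      have h5 := h4.trans (Cardinal.lift_le.mpr aux_rank_uea)
      rw [Cardinal.lift_aleph0] at h5
      have h6 := Cardinal.lift_le_aleph0.mp h5
      exact h1.trans (h3.trans h6)
    have heig : ∀ x : ↥A, ∃ μ : ℂ, ∀ φ ∈ H, (x : Module.End ℂ V) ∘ₗ φ = μ • φ := by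
      intro x
      let g : (↥V' →ₗ[ℂ] V) →ₗ[ℂ] (↥V' →ₗ[ℂ] V) :=
        { toFun := fun ψ => (x : Module.End ℂ V) ∘ₗ ψ
          map_add' := by intro p q; apply LinearMap.ext; intro m; simp
          map_smul' := by intro c p; apply LinearMap.ext; intro m; simp }
      have hgH : ∀ ψ ∈ H, g ψ ∈ H := fun ψ hψ => aux_comp_mem 𝔤' V' x.2 hψ
      let T : Module.End ℂ ↥H := g.restrict hgH
      haveI : Nontrivial ↥H :=
        ⟨⟨φ₀, hφ₀H⟩, 0, by intro hh; exact hφ₀ (congrArg Subtype.val hh)⟩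
      obtain ⟨μ, hμ⟩ := aux_exists_spectrum hrankH T
      refine ⟨μ, ?_⟩
      set S : Module.End ℂ ↥H := algebraMap ℂ (Module.End ℂ ↥H) μ - T with hSdef
      have hScoe : ∀ ψ : ↥H, ((S ψ : ↥H) : ↥V' →ₗ[ℂ] V)
          = μ • (ψ : ↥V' →ₗ[ℂ] V) - (x : Module.End ℂ V) ∘ₗ (ψ : ↥V' →ₗ[ℂ] V) := by
        intro ψ
        rw [hSdef]
        rw [LinearMap.sub_apply]
        rw [AddSubgroupClass.coe_sub]
        rw [Module.algebraMap_end_apply, SetLike.val_smul, LinearMap.restrict_coe_apply]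
        rfl
      have hcomp : ∀ (c : Module.End ℂ V), (x : Module.End ℂ V) * c = c * (x : Module.End ℂ V) →
          ∀ ψ : ↥V' →ₗ[ℂ] V, μ • (c ∘ₗ ψ) - (x : Module.End ℂ V) ∘ₗ (c ∘ₗ ψ)
            = c ∘ₗ (μ • ψ - (x : Module.End ℂ V) ∘ₗ ψ) := by
        intro c hcx ψ
        apply LinearMap.ext
        intro m
        have hxc : ∀ w : V, (x : Module.End ℂ V) (c w) = c ((x : Module.End ℂ V) w) := by
          intro w
          have := congrFun (congrArg DFunLike.coe hcx) w
          simpa [Module.End.mul_apply] using this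
        simp [LinearMap.sub_apply, LinearMap.comp_apply, LinearMap.smul_apply,
          hxc (ψ m), map_smul, map_sub]
      by_cases hker : LinearMap.ker S = ⊥
      · have hSinj : Function.Injective S := LinearMap.ker_eq_bot.mp hker
        set Wmap : Submodule ℂ (↥V' →ₗ[ℂ] V) :=
          Submodule.map H.subtype (LinearMap.range S) with hWdef
        have hWle : Wmap ≤ H := Submodule.map_subtype_le H (LinearMap.range S)
        have hWstab : ∀ c ∈ A, ∀ φ ∈ Wmap, c ∘ₗ φ ∈ Wmap := by
          intro c hc φ hφ
          obtain ⟨y, hy, rfl⟩ := hφ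
          obtain ⟨ψ, rfl⟩ := hy
          have hcx : (x : Module.End ℂ V) * c = c * (x : Module.End ℂ V) := by
            have := congrArg Subtype.val (hcomm x ⟨c, hc⟩)
            simpa using this
          refine ⟨S ⟨c ∘ₗ ↑ψ, aux_comp_mem 𝔤' V' hc ψ.2⟩, ⟨_, rfl⟩, ?_⟩
          show ((S ⟨c ∘ₗ ↑ψ, aux_comp_mem 𝔤' V' hc ψ.2⟩ : ↥H) : ↥V' →ₗ[ℂ] V)
            = c ∘ₗ ((S ψ : ↥H) : ↥V' →ₗ[ℂ] V)
          rw [hScoe, hScoe]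
          exact hcomp c hcx ↑ψ
        rcases hsimp Wmap hWle hWstab with hWbot | hWH
        · intro φ hφ
          have hmem : ((S ⟨φ, hφ⟩ : ↥H) : ↥V' →ₗ[ℂ] V) ∈ Wmap := ⟨S ⟨φ, hφ⟩, ⟨_, rfl⟩, rfl⟩
          rw [hWbot] at hmem
          have h0 := (Submodule.mem_bot ℂ).mp hmem
          rw [hScoe] at h0
          exact (sub_eq_zero.mp h0).symm
        · exfalso
          have hrange : LinearMap.range S = ⊤ := by
            apply Submodule.map_injective_of_injective (Submodule.injective_subtype H)
            rw [Submodule.map_subtype_top]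
            exact hWH
          exact hμ ((Module.End.isUnit_iff S).mpr ⟨hSinj, LinearMap.range_eq_top.mp hrange⟩)
      · set Umap : Submodule ℂ (↥V' →ₗ[ℂ] V) :=
          Submodule.map H.subtype (LinearMap.ker S) with hUdef
        have hUle' : Umap ≤ H := Submodule.map_subtype_le H _
        have hUstab' : ∀ c ∈ A, ∀ φ ∈ Umap, c ∘ₗ φ ∈ Umap := by
          intro c hc φ hφ
          obtain ⟨ψ, hψker, rfl⟩ := hφ
          have hcx : (x : Module.End ℂ V) * c = c * (x : Module.End ℂ V) := by
            have := congrArg Subtype.val (hcomm x ⟨c, hc⟩)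
            simpa using this
          refine ⟨⟨c ∘ₗ ↑ψ, aux_comp_mem 𝔤' V' hc ψ.2⟩, ?_, rfl⟩
          have hψker' : S ψ = 0 := hψker
          have hψ0 : μ • (ψ : ↥V' →ₗ[ℂ] V) - (x : Module.End ℂ V) ∘ₗ ↑ψ = 0 := by
            rw [← hScoe, hψker']
            rfl
          show S ⟨c ∘ₗ ↑ψ, aux_comp_mem 𝔤' V' hc ψ.2⟩ = 0
          apply Subtype.val_injective
          rw [hScoe]
          show μ • (c ∘ₗ (ψ : ↥V' →ₗ[ℂ] V)) - (x : Module.End ℂ V) ∘ₗ (c ∘ₗ ↑ψ) = 0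
          rw [hcomp c hcx ↑ψ, hψ0, LinearMap.comp_zero]
        have hUne' : Umap ≠ ⊥ := by
          obtain ⟨ψ, hψker, hψ0⟩ := Submodule.exists_mem_ne_zero_of_ne_bot hker
          intro hbot
          have hmem : (↑ψ : ↥V' →ₗ[ℂ] V) ∈ Umap := ⟨ψ, hψker, rfl⟩
          rw [hbot] at hmem
          exact hψ0 (Subtype.val_injective ((Submodule.mem_bot ℂ).mp hmem))
        have hUH' : Umap = H := (hsimp _ hUle' hUstab').resolve_left hUne'
        intro φ hφ
        have hmem : φ ∈ Umap := hUH' ▸ hφ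
        obtain ⟨ψ, hψker, hcoe⟩ := hmem
        have h0 : μ • (ψ : ↥V' →ₗ[ℂ] V) - (x : Module.End ℂ V) ∘ₗ ↑ψ = 0 := by
          rw [← hScoe, LinearMap.mem_ker.mp hψker]
          rfl
        have hcoe' : (ψ : ↥V' →ₗ[ℂ] V) = φ := hcoe
        rw [hcoe'] at h0
        exact (sub_eq_zero.mp h0).symm
    have hspan : H = Submodule.span ℂ {φ₀} := by
      have hle : Submodule.span ℂ {φ₀} ≤ H := by
        rw [Submodule.span_le]
        exact Set.singleton_subset_iff.mpr hφ₀H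
      have hstab : ∀ g ∈ A, ∀ φ ∈ Submodule.span ℂ {φ₀},
          g ∘ₗ φ ∈ Submodule.span ℂ {φ₀} := by
        intro g hg φ hφ
        obtain ⟨c, rfl⟩ := Submodule.mem_span_singleton.mp hφ
        obtain ⟨μ, hμ⟩ := heig ⟨g, hg⟩
        have hstep : g ∘ₗ (c • φ₀) = (c * μ) • φ₀ := by
          have h1 : g ∘ₗ (c • φ₀) = c • (g ∘ₗ φ₀) := by
            apply LinearMap.ext; intro m; simp
          rw [h1, hμ φ₀ hφ₀H, smul_smul]
        rw [hstep]
        exact Submodule.smul_mem _ _ (Submodule.mem_span_singleton_self φ₀)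
      have hne' : Submodule.span ℂ {φ₀} ≠ ⊥ := by
        intro h
        exact hφ₀ (Submodule.span_singleton_eq_bot.mp h)
      exact ((hsimp _ hle hstab).resolve_left hne').symm
    calc Module.rank ℂ ↥H = Module.rank ℂ ↥(Submodule.span ℂ {φ₀}) := by rw [hspan]
      _ ≤ Cardinal.mk ({φ₀} : Set (↥V' →ₗ[ℂ] V)) := rank_span_le {φ₀}
      _ = 1 := Cardinal.mk_singleton φ₀
end

section
/- Let T : C ⥤ D be an additive exact functor between abelian categories such that for every object M of C the induced map T* : Subobject(M) → Subobject(T M), N ↦ T(N), is bijective. Then T is fully faithful, and T sends simple objects of C to simple objects of D (an object being simple when its subobject lattice has exactly the two elements ⊥ ≠ ⊤). -/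
open CategoryTheory CategoryTheory.Limits

/-- Let `T : C ⥤ D` be an additive exact functor between abelian categories (exact
meaning that `T` preserves finite limits and finite colimits) such that for every object `M` the
induced map `Subobject M → Subobject (T M)`, `N ↦ T(N)`, is bijective.  Then `T` is fully
faithful and sends simple objects (objects whose subobject lattice has exactly the two elements
`⊥ ≠ ⊤`) to simple objects. -/
theorem fullyFaithful_of_bijective_on_subobjects
    {C D : Type*} [Category C] [Category D] [Abelian C] [Abelian D]
    (T : C ⥤ D) [T.Additive] [PreservesFiniteLimits T] [PreservesFiniteColimits T]
    (hbij : ∀ M : C, Function.Bijective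
      (fun N : Subobject M => Subobject.mk (T.map N.arrow))) :
    T.Full ∧ T.Faithful ∧
      ∀ M : C, IsSimpleOrder (Subobject M) → IsSimpleOrder (Subobject (T.obj M)) := by
  -- the value of the canonical map at `⊤` is `⊤`
  have htop : ∀ M : C, Subobject.mk (T.map (⊤ : Subobject M).arrow) = ⊤ := by
    intro M
    haveI : IsIso (T.map (⊤ : Subobject M).arrow) := inferInstance
    exact Subobject.mk_eq_top_of_isIso _
  -- the value of the canonical map at `⊥` is `⊥`
  have hbot : ∀ M : C, Subobject.mk (T.map (⊥ : Subobject M).arrow) = ⊥ := by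
    intro M
    rw [Subobject.mk_eq_bot_iff_zero, Subobject.bot_arrow, T.map_zero]
  -- zero-reflection: if `T.map f = 0` then `f = 0`
  have hzero : ∀ {X Y : C} (f : X ⟶ Y), T.map f = 0 → f = 0 := by
    intro X Y f hTf
    haveI : IsIso (kernel.ι (T.map f)) := by
      have : kernel.ι (T.map f) = (kernelIsoOfEq hTf).hom ≫ kernel.ι (0 : T.obj X ⟶ T.obj Y) :=
        (kernelIsoOfEq_hom_comp_ι hTf).symm
      rw [this]; infer_instance
    have hmapι : T.map (kernel.ι f) = kernelComparison f T ≫ kernel.ι (T.map f) :=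
      (kernelComparison_comp_ι f T).symm
    haveI : IsIso (T.map (kernel.ι f)) := by rw [hmapι]; infer_instance
    have harr : (Subobject.mk (kernel.ι f)).arrow =
        (Subobject.underlyingIso (kernel.ι f)).hom ≫ kernel.ι f :=
      ((Iso.inv_comp_eq _).1 (Subobject.underlyingIso_arrow (kernel.ι f))).symm ▸ rfl
    haveI : IsIso (T.map (Subobject.mk (kernel.ι f)).arrow) := by
      rw [harr, T.map_comp]; infer_instance
    have h1 : Subobject.mk (T.map (Subobject.mk (kernel.ι f)).arrow) = ⊤ :=
      Subobject.mk_eq_top_of_isIso _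
    have h2 : Subobject.mk (kernel.ι f) = ⊤ := by
      apply (hbij X).1
      show Subobject.mk (T.map (Subobject.mk (kernel.ι f)).arrow)
        = Subobject.mk (T.map (⊤ : Subobject X).arrow)
      rw [h1, htop X]
    haveI : IsIso (kernel.ι f) := (Subobject.isIso_iff_mk_eq_top _).2 h2
    have := kernel.condition f
    rw [← cancel_epi (kernel.ι f), comp_zero]
    exact this
  have hfaithful : T.Faithful := by
    constructor
    intro X Y f g h
    have : T.map (f - g) = 0 := by rw [T.map_sub, h, sub_self]
    have := hzero _ this
    rwa [sub_eq_zero] at this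
  haveI := hfaithful
  refine ⟨?_, hfaithful, ?_⟩
  · -- fullness via the graph trick
    constructor
    intro X Y g
    haveI : PreservesBinaryBiproduct X Y T :=
      Limits.preservesBinaryBiproduct_of_preservesBinaryProduct T
    -- the graph of `g` as a mono into `T.obj (X ⊞ Y)`
    let m : T.obj X ⟶ T.obj (X ⊞ Y) := biprod.lift (𝟙 (T.obj X)) g ≫ (T.mapBiprod X Y).inv
    have hm1 : m ≫ T.map biprod.fst = 𝟙 (T.obj X) := by
      simp only [m, Functor.mapBiprod_inv, Category.assoc, biprod.desc_eq, Preadditive.add_comp,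
        Preadditive.comp_add, ← T.map_comp, biprod.lift_fst_assoc, biprod.lift_snd_assoc]
      simp
    have hm2 : m ≫ T.map biprod.snd = g := by
      simp only [m, Functor.mapBiprod_inv, Category.assoc, biprod.desc_eq, Preadditive.add_comp,
        Preadditive.comp_add, ← T.map_comp, biprod.lift_fst_assoc, biprod.lift_snd_assoc]
      simp
    haveI : Mono m := mono_of_mono_fac hm1
    obtain ⟨N, hN⟩ := (hbij (X ⊞ Y)).2 (Subobject.mk m)
    -- identify `T.map N.arrow` with `m` up to iso
    let j : T.obj ((N : C)) ≅ T.obj X := Subobject.isoOfMkEqMk (T.map N.arrow) m hN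
    have hj : j.hom ≫ m = T.map N.arrow := Subobject.ofMkLEMk_comp hN.le
    -- the first projection of `N` becomes an isomorphism after applying `T`
    have hfst : T.map (N.arrow ≫ biprod.fst) = j.hom := by
      rw [T.map_comp, ← hj, Category.assoc, hm1, Category.comp_id]
    haveI : IsIso (T.map (N.arrow ≫ biprod.fst)) := by rw [hfst]; infer_instance
    -- reflect: faithful exact functor reflects isos (mono + epi)
    haveI : Mono (N.arrow ≫ biprod.fst) := T.mono_of_mono_map inferInstance
    haveI : Epi (N.arrow ≫ biprod.fst) := T.epi_of_epi_map inferInstance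
    haveI : IsIso (N.arrow ≫ biprod.fst) := isIso_of_mono_of_epi _
    refine ⟨inv (N.arrow ≫ biprod.fst) ≫ N.arrow ≫ biprod.snd, ?_⟩
    have hinv : T.map (inv (N.arrow ≫ biprod.fst)) = j.inv := by
      rw [← cancel_mono (T.map (N.arrow ≫ biprod.fst)), ← T.map_comp, IsIso.inv_hom_id,
        T.map_id, hfst, Iso.inv_hom_id]
    rw [T.map_comp, T.map_comp, hinv, ← hj]
    simp only [Category.assoc]
    rw [hm2, Iso.inv_hom_id_assoc]
  · -- simplicity transfer
    intro M hM
    have hsurj := (hbij M).2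
    have hinj := (hbij M).1
    refine { toNontrivial := ?_, eq_bot_or_eq_top := ?_ }
    · -- Nontrivial
      refine ⟨⊥, ⊤, ?_⟩
      intro h
      have : (⊥ : Subobject M) = ⊤ := by
        apply hinj
        show Subobject.mk (T.map (⊥ : Subobject M).arrow)
          = Subobject.mk (T.map (⊤ : Subobject M).arrow)
        rw [hbot M, htop M, h]
      exact bot_ne_top (α := Subobject M) this
    · intro P
      obtain ⟨N, hN⟩ := hsurj P
      rcases hM.eq_bot_or_eq_top N with h | h
      · left; rw [← hN, h]; exact hbot M
      · right; rw [← hN, h]; exact htop M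
end
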